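/- Suppose ℝ^n is spanned by the union of linear subspaces Ω_1,…,Ω_K, and for each k = 1,…,K we are given a finite family of vectors W_k = {w_{k,1},…,w_{k,N_k}} with each w_{k,ℓ} ∈ Ω_k, such that for every x ∈ Ω_k the set {w_{k,ℓ} : ⟨w_{k,ℓ}, x⟩ ≥ 0} spans Ω_k (W_k has a DSS of Ω_k with respect to every x ∈ Ω_k). Let W be the matrix obtained by stacking all rows of W_1,…,W_K. Then for every x ∈ ℝ^n the set of rows of W having nonnegative inner product with x spans ℝ^n, i.e. W has a DSS of ℝ^n with respect to every x ∈ ℝ^n. -/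

import Mathlib

/-- **Domain decomposition for directed spanning sets**: if `ℝ^n` is spanned by subspaces
`Ω_1, …, Ω_K`, each `w_{k,ℓ} ∈ Ω_k`, and for every `x ∈ Ω_k` the vectors `w_{k,ℓ}` with
`⟨w_{k,ℓ}, x⟩ ≥ 0` span `Ω_k`, then for every `x ∈ ℝ^n` the stacked family of all vectors
having nonnegative inner product with `x` spans `ℝ^n`. -/
theorem dss_domain_decomposition {n K : ℕ} (Ω : Fin K → Submodule ℝ (Fin n → ℝ))
    (hspan : (⨆ k, Ω k) = ⊤)
    (N : Fin K → ℕ) (w : ∀ k : Fin K, Fin (N k) → (Fin n → ℝ))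
    (hmem : ∀ k ℓ, w k ℓ ∈ Ω k)
    (hDSS : ∀ k : Fin K, ∀ x ∈ Ω k,
      (Ω k : Set (Fin n → ℝ)) ⊆
        (Submodule.span ℝ
          {v : Fin n → ℝ | ∃ ℓ, 0 ≤ dotProduct (w k ℓ) x ∧ w k ℓ = v} :
          Submodule ℝ (Fin n → ℝ))) :
    ∀ x : Fin n → ℝ,
      Submodule.span ℝ
        {v : Fin n → ℝ | ∃ k ℓ, 0 ≤ dotProduct (w k ℓ) x ∧ w k ℓ = v} = ⊤ := by
  intro x
  rw [eq_top_iff, ← hspan]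
  apply iSup_le
  intro k
  -- view everything in EuclideanSpace
  let Ωk : Submodule ℝ (EuclideanSpace ℝ (Fin n)) := (Ω k).comap (WithLp.linearEquiv 2 ℝ (Fin n → ℝ)).toLinearMap
  have : CompleteSpace Ωk := FiniteDimensional.complete ℝ Ωk
  let xE : EuclideanSpace ℝ (Fin n) := WithLp.toLp 2 x
  let y : Fin n → ℝ := WithLp.ofLp (Ωk.starProjection xE)
  have hy : y ∈ Ω k := Ωk.starProjection_apply_mem xE
  have hdot : ∀ ℓ, dotProduct (w k ℓ) y = dotProduct (w k ℓ) x := by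
    intro ℓ
    have horth : xE - WithLp.toLp 2 y ∈ Ωkᗮ := Ωk.sub_starProjection_mem_orthogonal xE
    let wE : EuclideanSpace ℝ (Fin n) := WithLp.toLp 2 (w k ℓ)
    have h0 : inner ℝ wE (xE - WithLp.toLp 2 y) = (0 : ℝ) :=
      (Submodule.mem_orthogonal Ωk _).1 horth _ (hmem k ℓ)
    have h1 : inner ℝ wE xE = (inner ℝ wE (WithLp.toLp 2 y) : ℝ) := by
      have := inner_sub_right (𝕜 := ℝ) wE xE (WithLp.toLp 2 y)
      rw [h0] at this
      linarith [this]
    have h2 : ∀ z : EuclideanSpace ℝ (Fin n),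
        inner ℝ wE z = dotProduct (w k ℓ) (WithLp.ofLp z) := by
      intro z
      simp [wE, PiLp.inner_apply, dotProduct, RCLike.inner_apply, mul_comm]
    exact (h2 _).symm.trans (h1.symm.trans (h2 xE))
  have hsub : {v : Fin n → ℝ | ∃ ℓ, 0 ≤ dotProduct (w k ℓ) y ∧ w k ℓ = v}
      ⊆ {v : Fin n → ℝ | ∃ k ℓ, 0 ≤ dotProduct (w k ℓ) x ∧ w k ℓ = v} := by
    rintro v ⟨ℓ, hℓ, rfl⟩
    exact ⟨k, ℓ, by rwa [← hdot], rfl⟩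
  intro v hv
  exact Submodule.span_mono hsub (hDSS k y hy hv)
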